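/- Under consistency, conditional independence Z(a*) ⊥ A | C, and cross-world independence Y(a,z) ⊥ Z(a*) | A=a, C=c, with positive densities, the counterfactual mean E[Y(A, Z(a*))] equals the generalized front-door functional Ψ = Σ_{z,c} Pr(Z=z | A=a*, C=c) · Σ_a E[Y | A=a, Z=z, C=c] Pr(A=a | C=c) Pr(C=c). -/

import Mathlib

open Finset
open scoped Classical BigOperators

noncomputable section

namespace FrontDoor

/-- Probability of an event under pmf `p` on a finite sample space. -/
def pr {Ω : Type*} [Fintype Ω] (p : Ω → ℝ) (E : Ω → Prop) : ℝ :=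
  ∑ ω, if E ω then p ω else 0

/-- Expectation of `X` under pmf `p`. -/
def ex {Ω : Type*} [Fintype Ω] (p : Ω → ℝ) (X : Ω → ℝ) : ℝ :=
  ∑ ω, p ω * X ω

/-- Conditional expectation `E[X | E]`. -/
def cex {Ω : Type*} [Fintype Ω] (p : Ω → ℝ) (X : Ω → ℝ) (E : Ω → Prop) : ℝ :=
  (∑ ω, if E ω then p ω * X ω else 0) / pr p E

/-- Conditional probability `Pr(E | F)`. -/
def cpr {Ω : Type*} [Fintype Ω] (p : Ω → ℝ) (E F : Ω → Prop) : ℝ :=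
  pr p (fun ω => E ω ∧ F ω) / pr p F

end FrontDoor

open FrontDoor

namespace FrontDoor

/-- Auxiliary: unnormalized restricted expectation `E[X · 1_E]`. -/
def nm {Ω : Type*} [Fintype Ω] (p : Ω → ℝ) (X : Ω → ℝ) (E : Ω → Prop) : ℝ :=
  ∑ ω, if E ω then p ω * X ω else 0

variable {Ω : Type*} [Fintype Ω]

lemma cex_eq (p : Ω → ℝ) (X : Ω → ℝ) (E : Ω → Prop) :
    cex p X E = nm p X E / pr p E := rfl

lemma pr_congr (p : Ω → ℝ) {E F : Ω → Prop} (h : ∀ ω, p ω ≠ 0 → (E ω ↔ F ω)) :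
    pr p E = pr p F := by
  unfold pr
  refine Finset.sum_congr rfl fun ω _ => ?_
  by_cases hp : p ω = 0
  · split_ifs <;> simp [hp]
  · simp [h ω hp]

lemma nm_congr (p : Ω → ℝ) {X X' : Ω → ℝ} {E F : Ω → Prop}
    (h : ∀ ω, p ω ≠ 0 → ((E ω ↔ F ω) ∧ (F ω → X ω = X' ω))) :
    nm p X E = nm p X' F := by
  unfold nm
  refine Finset.sum_congr rfl fun ω _ => ?_
  by_cases hp : p ω = 0
  · split_ifs <;> simp [hp]
  · have h1 := (h ω hp).1
    have h2 := (h ω hp).2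
    by_cases hF : F ω
    · rw [if_pos (h1.mpr hF), if_pos hF, h2 hF]
    · rw [if_neg (fun hE => hF (h1.mp hE)), if_neg hF]

lemma pr_mono (p : Ω → ℝ) (hp0 : ∀ ω, 0 ≤ p ω) {E F : Ω → Prop}
    (h : ∀ ω, E ω → F ω) : pr p E ≤ pr p F := by
  unfold pr
  refine Finset.sum_le_sum fun ω _ => ?_
  by_cases hE : E ω
  · rw [if_pos hE, if_pos (h ω hE)]
  · rw [if_neg hE]; split_ifs with h'
    · exact hp0 ω
    · exact le_refl 0

lemma nm_eq_sum (p : Ω → ℝ) (X : Ω → ℝ) (E : Ω → Prop) :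
    nm p X E = ∑ y ∈ Finset.univ.image X, y * pr p (fun ω => X ω = y ∧ E ω) := by
  unfold nm pr
  simp_rw [Finset.mul_sum, mul_ite, mul_zero]
  rw [Finset.sum_comm]
  refine Finset.sum_congr rfl fun ω _ => ?_
  simp_rw [ite_and]
  rw [Finset.sum_ite_eq (Finset.univ.image X) (X ω)
    (fun y => if E ω then y * p ω else 0)]
  have : X ω ∈ Finset.univ.image X := Finset.mem_image.mpr ⟨ω, Finset.mem_univ ω, rfl⟩
  rw [if_pos this]
  split_ifs <;> ring

lemma pr_inter (p : Ω → ℝ) {B E : Ω → Prop} (hE : pr p E ≠ 0) :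
    pr p (fun ω => B ω ∧ E ω) = cpr p B E * pr p E := by
  unfold cpr
  rw [div_mul_cancel₀ _ hE]

lemma indep_nm (p : Ω → ℝ) (X : Ω → ℝ) (B E : Ω → Prop) (hE : pr p E ≠ 0)
    (h : ∀ y : ℝ, cpr p (fun ω => X ω = y ∧ B ω) E
        = cpr p (fun ω => X ω = y) E * cpr p (fun ω => B ω) E) :
    nm p X (fun ω => B ω ∧ E ω) = nm p X E * cpr p (fun ω => B ω) E := by
  rw [nm_eq_sum, nm_eq_sum, Finset.sum_mul]
  refine Finset.sum_congr rfl fun y _ => ?_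
  have h1 : pr p (fun ω => X ω = y ∧ B ω ∧ E ω)
      = pr p (fun ω => (X ω = y ∧ B ω) ∧ E ω) :=
    pr_congr p (fun ω _ => by tauto)
  rw [h1, pr_inter p hE, h y, pr_inter p hE]
  ring

end FrontDoor

theorem piie_identification
    {Ω α ζ γ : Type*} [Fintype Ω] [Fintype α] [Fintype ζ] [Fintype γ]
    (p : Ω → ℝ) (hp0 : ∀ ω, 0 ≤ p ω) (hp1 : ∑ ω, p ω = 1)
    (A : Ω → α) (Z : Ω → ζ) (Y : Ω → ℝ) (C : Ω → γ)
    (Zc : α → Ω → ζ) (Yc : α → ζ → Ω → ℝ) (astar : α)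
    -- M1: consistency (almost surely)
    (hconsZ : ∀ ω, p ω ≠ 0 → Zc (A ω) ω = Z ω)
    (hconsY : ∀ ω, p ω ≠ 0 → Yc (A ω) (Z ω) ω = Y ω)
    -- M2: Z(a') ⊥ A | C for all a', c
    (hM2 : ∀ (a' : α) (z : ζ) (a : α) (c : γ),
      cpr p (fun ω => Zc a' ω = z ∧ A ω = a) (fun ω => C ω = c)
        = cpr p (fun ω => Zc a' ω = z) (fun ω => C ω = c)
          * cpr p (fun ω => A ω = a) (fun ω => C ω = c))
    -- M3: Y(a,z) ⊥ Z(a') | A = a, C = c for all z, a, a', c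
    (hM3 : ∀ (a a' : α) (z z' : ζ) (c : γ) (y : ℝ),
      cpr p (fun ω => Yc a z ω = y ∧ Zc a' ω = z') (fun ω => A ω = a ∧ C ω = c)
        = cpr p (fun ω => Yc a z ω = y) (fun ω => A ω = a ∧ C ω = c)
          * cpr p (fun ω => Zc a' ω = z') (fun ω => A ω = a ∧ C ω = c))
    -- positivity (P1 and P2)
    (hposAC : ∀ (a : α) (c : γ), 0 < pr p (fun ω => A ω = a ∧ C ω = c))
    (hposZAC : ∀ (a : α) (z : ζ) (c : γ),
      0 < pr p (fun ω => A ω = a ∧ Z ω = z ∧ C ω = c)) :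
    ex p (fun ω => Yc (A ω) (Zc astar ω) ω)
      = ∑ z : ζ, ∑ c : γ,
          cpr p (fun ω => Z ω = z) (fun ω => A ω = astar ∧ C ω = c)
            * ∑ a : α,
                cex p Y (fun ω => A ω = a ∧ Z ω = z ∧ C ω = c)
                  * cpr p (fun ω => A ω = a) (fun ω => C ω = c)
                  * pr p (fun ω => C ω = c) := by
  classical
  have hPc : ∀ c : γ, 0 < pr p (fun ω => C ω = c) := fun c =>
    lt_of_lt_of_le (hposAC astar c) (pr_mono p hp0 fun ω h => h.2)
  -- Key per-cell identity
  have hT : ∀ (a : α) (z : ζ) (c : γ),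
      nm p (Yc a z) (fun ω => A ω = a ∧ Zc astar ω = z ∧ C ω = c)
        = cex p Y (fun ω => A ω = a ∧ Z ω = z ∧ C ω = c)
          * cpr p (fun ω => Z ω = z) (fun ω => A ω = astar ∧ C ω = c)
          * pr p (fun ω => A ω = a ∧ C ω = c) := by
    intro a z c
    have hPpos := hposAC a c
    have hPne : pr p (fun ω => A ω = a ∧ C ω = c) ≠ 0 := ne_of_gt hPpos
    have hPcne : pr p (fun ω => C ω = c) ≠ 0 := ne_of_gt (hPc c)
    -- rewrite the event
    have e1 : nm p (Yc a z) (fun ω => A ω = a ∧ Zc astar ω = z ∧ C ω = c)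
        = nm p (Yc a z) (fun ω => Zc astar ω = z ∧ (A ω = a ∧ C ω = c)) :=
      nm_congr p (fun ω _ => ⟨by tauto, fun _ => rfl⟩)
    -- cross-world independence applied to a'=astar
    have e2 : nm p (Yc a z) (fun ω => Zc astar ω = z ∧ (A ω = a ∧ C ω = c))
        = nm p (Yc a z) (fun ω => A ω = a ∧ C ω = c)
          * cpr p (fun ω => Zc astar ω = z) (fun ω => A ω = a ∧ C ω = c) :=
      indep_nm p _ _ _ hPne (fun y => hM3 a astar z z c y)
    -- the a.s. event/variable identification on {A = a, Z = z}
    have hiff : ∀ ω, p ω ≠ 0 →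
        ((A ω = a ∧ Z ω = z ∧ C ω = c) ↔ (Zc a ω = z ∧ (A ω = a ∧ C ω = c))) := by
      intro ω hp
      constructor
      · rintro ⟨ha, hz, hc⟩
        refine ⟨?_, ha, hc⟩
        rw [← ha, hconsZ ω hp]; exact hz
      · rintro ⟨hzc, ha, hc⟩
        refine ⟨ha, ?_, hc⟩
        rw [← hconsZ ω hp, ha]; exact hzc
    -- claim 1 ingredients
    have e3 : nm p Y (fun ω => A ω = a ∧ Z ω = z ∧ C ω = c)
        = nm p (Yc a z) (fun ω => A ω = a ∧ C ω = c)
          * cpr p (fun ω => Zc a ω = z) (fun ω => A ω = a ∧ C ω = c) := by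
      have step : nm p Y (fun ω => A ω = a ∧ Z ω = z ∧ C ω = c)
          = nm p (Yc a z) (fun ω => Zc a ω = z ∧ (A ω = a ∧ C ω = c)) := by
        refine nm_congr p (fun ω hp => ⟨hiff ω hp, ?_⟩)
        rintro ⟨hzc, ha, hc⟩
        have hz : Z ω = z := ((hiff ω hp).mpr ⟨hzc, ha, hc⟩).2.1
        rw [← hconsY ω hp, ha, hz]
      rw [step]
      exact indep_nm p _ _ _ hPne (fun y => hM3 a a z z c y)
    have e4 : pr p (fun ω => A ω = a ∧ Z ω = z ∧ C ω = c)
        = cpr p (fun ω => Zc a ω = z) (fun ω => A ω = a ∧ C ω = c)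
          * pr p (fun ω => A ω = a ∧ C ω = c) := by
      rw [← pr_inter p hPne]
      exact pr_congr p hiff
    have hQ := hposZAC a z c
    have hr : cpr p (fun ω => Zc a ω = z) (fun ω => A ω = a ∧ C ω = c) ≠ 0 := by
      intro h0
      rw [h0, zero_mul] at e4
      exact ne_of_gt hQ e4
    have e5 : cex p Y (fun ω => A ω = a ∧ Z ω = z ∧ C ω = c)
        = nm p (Yc a z) (fun ω => A ω = a ∧ C ω = c)
          / pr p (fun ω => A ω = a ∧ C ω = c) := by
      rw [cex_eq, e3, e4]
      field_simp
    -- claim 2: the mediator law does not depend on a, and equals the factual one at astar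
    have key : ∀ a0 : α, cpr p (fun ω => Zc astar ω = z) (fun ω => A ω = a0 ∧ C ω = c)
        = cpr p (fun ω => Zc astar ω = z) (fun ω => C ω = c) := by
      intro a0
      have h2 := hM2 astar z a0 c
      unfold cpr at h2 ⊢
      have hre : pr p (fun ω => Zc astar ω = z ∧ (A ω = a0 ∧ C ω = c))
          = pr p (fun ω => (Zc astar ω = z ∧ A ω = a0) ∧ C ω = c) :=
        pr_congr p (fun ω _ => by tauto)
      rw [hre]
      have hP0ne : pr p (fun ω => A ω = a0 ∧ C ω = c) ≠ 0 := ne_of_gt (hposAC a0 c)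
      field_simp at h2 ⊢
      apply mul_right_cancel₀ hPcne
      linear_combination (pr p fun ω => C ω = c) * h2
    have e6 : cpr p (fun ω => Zc astar ω = z) (fun ω => A ω = a ∧ C ω = c)
        = cpr p (fun ω => Z ω = z) (fun ω => A ω = astar ∧ C ω = c) := by
      rw [key a, ← key astar]
      unfold cpr
      congr 1
      refine pr_congr p (fun ω hp => ?_)
      show (Zc astar ω = z ∧ A ω = astar ∧ C ω = c) ↔ (Z ω = z ∧ A ω = astar ∧ C ω = c)
      constructor
      · rintro ⟨hzc, ha, hc⟩
        refine ⟨?_, ha, hc⟩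
        rw [← hconsZ ω hp, ha]; exact hzc
      · rintro ⟨hz, ha, hc⟩
        refine ⟨?_, ha, hc⟩
        rw [← ha, hconsZ ω hp]; exact hz
    rw [e1, e2, e5, e6]
    field_simp
  -- Step A: pointwise decomposition of the counterfactual mean
  have hA : ex p (fun ω => Yc (A ω) (Zc astar ω) ω)
      = ∑ a : α, ∑ z : ζ, ∑ c : γ,
          nm p (Yc a z) (fun ω => A ω = a ∧ Zc astar ω = z ∧ C ω = c) := by
    unfold ex
    have step : ∀ ω : Ω, p ω * Yc (A ω) (Zc astar ω) ω
        = ∑ a : α, ∑ z : ζ, ∑ c : γ,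
            if A ω = a ∧ Zc astar ω = z ∧ C ω = c then p ω * Yc a z ω else 0 := by
      intro ω
      rw [Finset.sum_eq_single (A ω)]
      · rw [Finset.sum_eq_single (Zc astar ω)]
        · rw [Finset.sum_eq_single (C ω)]
          · simp
          · intro c _ hc
            exact if_neg (fun h => hc h.2.2.symm)
          · intro h; exact absurd (Finset.mem_univ _) h
        · intro z _ hz
          refine Finset.sum_eq_zero fun c _ => ?_
          exact if_neg (fun h => hz h.2.1.symm)
        · intro h; exact absurd (Finset.mem_univ _) h
      · intro a _ ha
        refine Finset.sum_eq_zero fun z _ => Finset.sum_eq_zero fun c _ => ?_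
        exact if_neg (fun h => ha h.1.symm)
      · intro h; exact absurd (Finset.mem_univ _) h
    calc (∑ ω : Ω, p ω * Yc (A ω) (Zc astar ω) ω)
        = ∑ ω : Ω, ∑ a : α, ∑ z : ζ, ∑ c : γ,
            (if A ω = a ∧ Zc astar ω = z ∧ C ω = c then p ω * Yc a z ω else 0) :=
          Finset.sum_congr rfl fun ω _ => step ω
      _ = ∑ a : α, ∑ ω : Ω, ∑ z : ζ, ∑ c : γ,
            (if A ω = a ∧ Zc astar ω = z ∧ C ω = c then p ω * Yc a z ω else 0) :=
          Finset.sum_comm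
      _ = ∑ a : α, ∑ z : ζ, ∑ ω : Ω, ∑ c : γ,
            (if A ω = a ∧ Zc astar ω = z ∧ C ω = c then p ω * Yc a z ω else 0) :=
          Finset.sum_congr rfl fun a _ => Finset.sum_comm
      _ = ∑ a : α, ∑ z : ζ, ∑ c : γ, ∑ ω : Ω,
            (if A ω = a ∧ Zc astar ω = z ∧ C ω = c then p ω * Yc a z ω else 0) :=
          Finset.sum_congr rfl fun a _ => Finset.sum_congr rfl fun z _ => Finset.sum_comm
      _ = ∑ a : α, ∑ z : ζ, ∑ c : γ,
            nm p (Yc a z) (fun ω => A ω = a ∧ Zc astar ω = z ∧ C ω = c) := by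
          refine Finset.sum_congr rfl fun a _ => Finset.sum_congr rfl fun z _ =>
            Finset.sum_congr rfl fun c _ => Finset.sum_congr rfl fun ω _ => ?_
          simp only [nm]
          split_ifs <;> rfl
  -- Assemble
  have hPAC : ∀ (a : α) (c : γ), pr p (fun ω => A ω = a ∧ C ω = c)
      = cpr p (fun ω => A ω = a) (fun ω => C ω = c) * pr p (fun ω => C ω = c) := by
    intro a c
    unfold cpr
    rw [div_mul_cancel₀ _ (ne_of_gt (hPc c))]
  rw [hA]
  simp only [hT]
  rw [Finset.sum_comm]
  refine Finset.sum_congr rfl fun z _ => ?_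
  rw [Finset.sum_comm]
  refine Finset.sum_congr rfl fun c _ => ?_
  rw [Finset.mul_sum]
  refine Finset.sum_congr rfl fun a _ => ?_
  rw [hPAC a c]
  ring
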